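/- For fixed d ∈ [0,1] with d < 1/2, the TOPSIS utility u(d,s) = √((d-1)²+s²) - √(d²+s²) is strictly decreasing in s ∈ [0,1]; for fixed d > 1/2 it is strictly increasing in s ∈ [0,1]. -/
import Mathlib

lemma topsis_aux (a b s₁ s₂ : ℝ) (hb : 0 ≤ b) (hba : b < a)
    (hs1 : 0 ≤ s₁) (hs : s₁ < s₂) :
    Real.sqrt (a + s₂ ^ 2) - Real.sqrt (b + s₂ ^ 2) <
      Real.sqrt (a + s₁ ^ 2) - Real.sqrt (b + s₁ ^ 2) := by
  have ha : (0:ℝ) ≤ a := le_of_lt (lt_of_le_of_lt hb hba)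
  have h1 : 0 ≤ a + s₁ ^ 2 := by positivity
  have h2 : 0 ≤ a + s₂ ^ 2 := by positivity
  have h3 : 0 ≤ b + s₁ ^ 2 := by positivity
  have h4 : 0 ≤ b + s₂ ^ 2 := by positivity
  set A₁ := Real.sqrt (a + s₁ ^ 2) with hA1d
  set A₂ := Real.sqrt (a + s₂ ^ 2) with hA2d
  set B₁ := Real.sqrt (b + s₁ ^ 2) with hB1d
  set B₂ := Real.sqrt (b + s₂ ^ 2) with hB2d
  have hA1 : A₁ ^ 2 = a + s₁ ^ 2 := Real.sq_sqrt h1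
  have hA2 : A₂ ^ 2 = a + s₂ ^ 2 := Real.sq_sqrt h2
  have hB1 : B₁ ^ 2 = b + s₁ ^ 2 := Real.sq_sqrt h3
  have hB2 : B₂ ^ 2 = b + s₂ ^ 2 := Real.sq_sqrt h4
  have hA1n : 0 ≤ A₁ := Real.sqrt_nonneg _
  have hB1n : 0 ≤ B₁ := Real.sqrt_nonneg _
  have hB2p : 0 < B₂ := Real.sqrt_pos.mpr (by nlinarith)
  have hAB2 : B₂ < A₂ := Real.sqrt_lt_sqrt h4 (by linarith)
  have hAB1 : B₁ < A₁ := Real.sqrt_lt_sqrt h3 (by linarith)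
  have hBB : B₁ < B₂ := Real.sqrt_lt_sqrt h3 (by nlinarith)
  have hAA : A₁ < A₂ := Real.sqrt_lt_sqrt h1 (by nlinarith)
  nlinarith [mul_pos (sub_pos.mpr hBB) (show (0:ℝ) < B₂ + B₁ + A₂ + A₁ by linarith),
    mul_pos (sub_pos.mpr hAA) (show (0:ℝ) < A₂ + A₁ by linarith)]

theorem topsisUtility_monotone_in_s
    (u : ℝ → ℝ → ℝ)
    (hu : ∀ d s : ℝ, u d s = Real.sqrt ((d - 1) ^ 2 + s ^ 2) - Real.sqrt (d ^ 2 + s ^ 2)) :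
    (∀ d : ℝ, d ∈ Set.Icc (0 : ℝ) 1 → d < 1 / 2 →
      ∀ s₁ s₂ : ℝ, s₁ ∈ Set.Icc (0 : ℝ) 1 → s₂ ∈ Set.Icc (0 : ℝ) 1 →
        s₁ < s₂ → u d s₂ < u d s₁) ∧
    (∀ d : ℝ, d ∈ Set.Icc (0 : ℝ) 1 → 1 / 2 < d →
      ∀ s₁ s₂ : ℝ, s₁ ∈ Set.Icc (0 : ℝ) 1 → s₂ ∈ Set.Icc (0 : ℝ) 1 →
        s₁ < s₂ → u d s₁ < u d s₂) := by
  constructor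
  · intro d hd hdlt s₁ s₂ hs₁ hs₂ hs
    rw [hu, hu]
    exact topsis_aux ((d - 1) ^ 2) (d ^ 2) s₁ s₂ (by positivity) (by nlinarith) hs₁.1 hs
  · intro d hd hdlt s₁ s₂ hs₁ hs₂ hs
    rw [hu, hu]
    have := topsis_aux (d ^ 2) ((d - 1) ^ 2) s₁ s₂ (by positivity) (by nlinarith) hs₁.1 hs
    linarith
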